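/- Let X ∈ M_n(ℂ) ⊗ M_d(ℂ) be a nonzero positive semidefinite matrix. If for every unit vector x ∈ ℂⁿ and every unit vector y ∈ ℂ^d one has ⟨x⊗y, X (x⊗y)⟩ < Tr(X²)/Tr(X), then X ∉ SEP_{n,d}. -/

import Mathlib

open MeasureTheory Filter Topology Polynomial Matrix Kronecker
open scoped ComplexOrder

noncomputable section

/-- Measurable space structure on matrices (entrywise). -/
instance matMS (m n : Type*) : MeasurableSpace (Matrix m n ℂ) :=
  inferInstanceAs (MeasurableSpace (m → n → ℂ))

/-- The ℓ²→ℓ² operator norm of a complex square matrix. -/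
def opNorm {N : Type*} [Fintype N] [DecidableEq N] (X : Matrix N N ℂ) : ℝ :=
  ‖Matrix.toEuclideanCLM (𝕜 := ℂ) (n := N) X‖

/-- Application of a real polynomial to a complex square matrix. -/
def polyApply {N : Type*} [Fintype N] [DecidableEq N] (P : Polynomial ℝ)
    (X : Matrix N N ℂ) : Matrix N N ℂ :=
  Polynomial.aeval X (P.map (algebraMap ℝ ℂ))

/-- The (topological) support of a measure on ℝ: points all of whose open
neighbourhoods have positive measure. -/
def msupport (μ : Measure ℝ) : Set ℝ :=
  {x | ∀ U : Set ℝ, IsOpen U → x ∈ U → 0 < μ U}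

/-- Strong convergence of a sequence of random matrices `X d ∈ M_n(ℂ) ⊗ M_d(ℂ)`
towards a compactly supported probability measure `μ`: almost surely, for every
real polynomial `P`, the normalized traces of `P(X d)` converge to `∫ P dμ` and the
operator norms of `P(X d)` converge to `sup {|P(x)| : x ∈ supp μ}`. -/
def StrongConv {Ω : Type*} [MeasurableSpace Ω] (ℙ : Measure Ω) (n : ℕ)
    (X : (d : ℕ) → Ω → Matrix (Fin n × Fin d) (Fin n × Fin d) ℂ)
    (μ : Measure ℝ) : Prop :=
  ∀ᵐ ω ∂ℙ, ∀ P : Polynomial ℝ,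
    Tendsto (fun d : ℕ => ((n : ℂ) * (d : ℂ))⁻¹ * (polyApply P (X d ω)).trace) atTop
      (𝓝 ((∫ x, P.eval x ∂μ : ℝ) : ℂ)) ∧
    Tendsto (fun d : ℕ => opNorm (polyApply P (X d ω))) atTop
      (𝓝 (sSup ((fun x => |P.eval x|) '' msupport μ)))

/-- Unitary invariance of a sequence of random matrices: for every `d` and every
unitary `U`, the random matrix `U (X d) U*` has the same distribution as `X d`. -/
def UnitInv {Ω : Type*} [MeasurableSpace Ω] (ℙ : Measure Ω) (n : ℕ)
    (X : (d : ℕ) → Ω → Matrix (Fin n × Fin d) (Fin n × Fin d) ℂ) : Prop :=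
  ∀ d : ℕ, ∀ U : Matrix (Fin n × Fin d) (Fin n × Fin d) ℂ,
    U ∈ unitary (Matrix (Fin n × Fin d) (Fin n × Fin d) ℂ) →
    Measure.map (fun ω => U * X d ω * star U) ℙ = Measure.map (X d) ℙ

/-- The separable cone `SEP_{n,d}`. -/
def SEP (n d : ℕ) : Set (Matrix (Fin n × Fin d) (Fin n × Fin d) ℂ) :=
  {X | ∃ (k : ℕ) (A : Fin k → Matrix (Fin n) (Fin n) ℂ)
      (B : Fin k → Matrix (Fin d) (Fin d) ℂ),
    (∀ i, (A i).PosSemidef) ∧ (∀ i, (B i).PosSemidef) ∧ X = ∑ i, A i ⊗ₖ B i}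

/-- The partial transpose on `M_n(ℂ) ⊗ M_d(ℂ)`: transposition of the first factor. -/
def ptrans {n d : ℕ} (X : Matrix (Fin n × Fin d) (Fin n × Fin d) ℂ) :
    Matrix (Fin n × Fin d) (Fin n × Fin d) ℂ :=
  fun p q => X (q.1, p.2) (p.1, q.2)

/-- The PPT cone `PPT_{n,d}`: positive semidefinite matrices with positive
semidefinite partial transpose. -/
def PPT (n d : ℕ) : Set (Matrix (Fin n × Fin d) (Fin n × Fin d) ℂ) :=
  {X | X.PosSemidef ∧ (ptrans X).PosSemidef}

/-- a nonzero PSD matrix whose diagonal values on product unit vectors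
are all strictly below `Tr(X²)/Tr(X)` is entangled. -/
lemma spec {N : Type*} [Fintype N] [DecidableEq N] {A : Matrix N N ℂ} (hA : A.PosSemidef) :
    ∃ (α : N → ℝ) (V : Matrix N N ℂ),
      (∀ k, 0 ≤ α k) ∧ (∀ k, ∑ m, Complex.normSq (V m k) = 1) ∧
      (∀ m m', A m m' = ∑ k, (α k : ℂ) * (V m k * (starRingEnd ℂ) (V m' k))) ∧
      A.trace = ((∑ k, α k : ℝ) : ℂ) := by
  have hH := hA.1
  set α := hH.eigenvalues with hα
  set V := (hH.eigenvectorUnitary : Matrix N N ℂ) with hV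
  have hcsum : ∀ k, ∑ m, ((Complex.normSq (V m k) : ℝ) : ℂ) = 1 := by
    intro k
    have h1 : (star V * V) k k = 1 := by
      rw [Unitary.coe_star_mul_self]; simp
    rw [Matrix.mul_apply] at h1
    rw [← h1]
    refine Finset.sum_congr rfl fun m _ => ?_
    rw [Matrix.star_apply, Complex.normSq_eq_conj_mul_self]
    rfl
  have hunit : ∀ k, ∑ m, Complex.normSq (V m k) = 1 := by
    intro k
    have := hcsum k
    rw [← Complex.ofReal_sum] at this
    exact_mod_cast this
  have hrep : ∀ m m', A m m' = ∑ k, (α k : ℂ) * (V m k * (starRingEnd ℂ) (V m' k)) := by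
    intro m m'
    conv_lhs => rw [hH.spectral_theorem, Unitary.conjStarAlgAut_apply]
    rw [Matrix.mul_assoc, Matrix.mul_apply]
    refine Finset.sum_congr rfl fun k _ => ?_
    rw [Matrix.diagonal_mul, Matrix.star_apply]
    simp only [Function.comp_apply, Complex.real_smul, smul_eq_mul, mul_one,
      Complex.coe_algebraMap, RCLike.ofReal_alg]
    ring_nf
    rw [hα, hV, RCLike.star_def]
    ring
  refine ⟨α, V, fun k => hA.eigenvalues_nonneg k, hunit, hrep, ?_⟩
  rw [Matrix.trace, Complex.ofReal_sum]
  simp only [Matrix.diag_apply]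
  rw [Finset.sum_congr rfl (fun m (_ : m ∈ Finset.univ) => hrep m m)]
  rw [Finset.sum_comm]
  refine Finset.sum_congr rfl fun k _ => ?_
  rw [← Finset.mul_sum]
  have : ∑ m, V m k * (starRingEnd ℂ) (V m k) = 1 := by
    rw [← hcsum k]
    refine Finset.sum_congr rfl fun m _ => ?_
    rw [Complex.mul_conj]
  rw [this, mul_one]

lemma trace_vmv {N : Type*} [Fintype N] (u v : N → ℂ) (X : Matrix N N ℂ) :
    (Matrix.vecMulVec u v * X).trace = v ⬝ᵥ X *ᵥ u := by
  simp only [Matrix.trace, Matrix.diag_apply, Matrix.mul_apply, Matrix.vecMulVec_apply,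
    dotProduct, Matrix.mulVec, Finset.mul_sum]
  rw [Finset.sum_comm]
  refine Finset.sum_congr rfl fun q _ => Finset.sum_congr rfl fun p _ => by ring

lemma kron_decomp {n d : ℕ} (A : Matrix (Fin n) (Fin n) ℂ) (B : Matrix (Fin d) (Fin d) ℂ)
    (α : Fin n → ℝ) (β : Fin d → ℝ) (V : Matrix (Fin n) (Fin n) ℂ) (W : Matrix (Fin d) (Fin d) ℂ)
    (hrepA : ∀ m m', A m m' = ∑ k, (α k : ℂ) * (V m k * (starRingEnd ℂ) (V m' k)))
    (hrepB : ∀ m m', B m m' = ∑ l, (β l : ℂ) * (W m l * (starRingEnd ℂ) (W m' l))) :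
    A ⊗ₖ B = ∑ k, ∑ l, ((α k * β l : ℝ) : ℂ) •
      Matrix.vecMulVec (fun p : Fin n × Fin d => V p.1 k * W p.2 l)
        (star fun p : Fin n × Fin d => V p.1 k * W p.2 l) := by
  ext p q
  simp only [Matrix.kroneckerMap_apply, Finset.sum_apply, Matrix.sum_apply, Matrix.smul_apply,
    Matrix.vecMulVec_apply, Pi.star_apply, smul_eq_mul]
  rw [hrepA p.1 q.1, hrepB p.2 q.2, Finset.sum_mul_sum]
  refine Finset.sum_congr rfl fun k _ => Finset.sum_congr rfl fun l _ => ?_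
  simp only [Complex.ofReal_mul, RCLike.star_def, _root_.map_mul]
  ring

lemma key {n d : ℕ} (X : Matrix (Fin n × Fin d) (Fin n × Fin d) ℂ) (c : ℝ)
    (h : ∀ (x : Fin n → ℂ) (y : Fin d → ℂ),
      (∑ i, Complex.normSq (x i)) = 1 → (∑ j, Complex.normSq (y j)) = 1 →
      (star (fun p : Fin n × Fin d => x p.1 * y p.2) ⬝ᵥ
          X *ᵥ (fun p : Fin n × Fin d => x p.1 * y p.2)).re < c)
    {A : Matrix (Fin n) (Fin n) ℂ} {B : Matrix (Fin d) (Fin d) ℂ}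
    (hA : A.PosSemidef) (hB : B.PosSemidef) :
    ((A ⊗ₖ B) * X).trace.re ≤ c * (A.trace.re * B.trace.re) ∧
    (A ≠ 0 → B ≠ 0 → ((A ⊗ₖ B) * X).trace.re < c * (A.trace.re * B.trace.re)) := by
  obtain ⟨α, V, hα, hunitA, hrepA, htrA⟩ := spec hA
  obtain ⟨β, W, hβ, hunitB, hrepB, htrB⟩ := spec hB
  set z : Fin n → Fin d → (Fin n × Fin d) → ℂ :=
    fun k l p => V p.1 k * W p.2 l with hz
  set Q : Fin n → Fin d → ℝ := fun k l => (star (z k l) ⬝ᵥ X *ᵥ z k l).re with hQdef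
  have hQ : ∀ k l, Q k l < c := by
    intro k l
    exact h (fun m => V m k) (fun m => W m l) (hunitA k) (hunitB l)
  -- trace formula
  have hT : ((A ⊗ₖ B) * X).trace.re = ∑ k, ∑ l, (α k * β l) * Q k l := by
    rw [kron_decomp A B α β V W hrepA hrepB, Finset.sum_mul, Matrix.trace_sum]
    rw [Complex.re_sum]
    refine Finset.sum_congr rfl fun k _ => ?_
    rw [Finset.sum_mul, Matrix.trace_sum, Complex.re_sum]
    refine Finset.sum_congr rfl fun l _ => ?_
    rw [smul_mul_assoc, Matrix.trace_smul, smul_eq_mul, Complex.re_ofReal_mul, trace_vmv]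
  have htrAre : A.trace.re = ∑ k, α k := by rw [htrA, Complex.ofReal_re]
  have htrBre : B.trace.re = ∑ l, β l := by rw [htrB, Complex.ofReal_re]
  have hRHS : c * (A.trace.re * B.trace.re) = ∑ k, ∑ l, (α k * β l) * c := by
    rw [htrAre, htrBre, Finset.sum_mul_sum]
    rw [Finset.mul_sum]
    refine Finset.sum_congr rfl fun k _ => ?_
    rw [Finset.mul_sum]
    refine Finset.sum_congr rfl fun l _ => ?_
    ring
  constructor
  · rw [hT, hRHS]
    refine Finset.sum_le_sum fun k _ => Finset.sum_le_sum fun l _ => ?_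
    exact mul_le_mul_of_nonneg_left (hQ k l).le (mul_nonneg (hα k) (hβ l))
  · intro hA0 hB0
    have hk0 : ∃ k0, 0 < α k0 := by
      by_contra hc
      push_neg at hc
      have : ∀ k, α k = 0 := fun k => le_antisymm (hc k) (hα k)
      refine hA0 ?_
      ext m m'
      rw [hrepA m m']
      simp [this]
    have hl0 : ∃ l0, 0 < β l0 := by
      by_contra hc
      push_neg at hc
      have : ∀ l, β l = 0 := fun l => le_antisymm (hc l) (hβ l)
      refine hB0 ?_
      ext m m'
      rw [hrepB m m']
      simp [this]
    obtain ⟨k0, hk0⟩ := hk0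
    obtain ⟨l0, hl0⟩ := hl0
    rw [hT, hRHS, ← Finset.sum_product', ← Finset.sum_product']
    refine Finset.sum_lt_sum (fun i _ => ?_)
      ⟨(k0, l0), Finset.mem_product.mpr ⟨Finset.mem_univ _, Finset.mem_univ _⟩, ?_⟩
    · exact mul_le_mul_of_nonneg_left (hQ i.1 i.2).le (mul_nonneg (hα i.1) (hβ i.2))
    · exact mul_lt_mul_of_pos_left (hQ k0 l0) (mul_pos hk0 hl0)

lemma trace_im {N : Type*} [Fintype N] [DecidableEq N] {A : Matrix N N ℂ}
    (hA : A.PosSemidef) : A.trace.im = 0 := by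
  obtain ⟨α, V, hα, _, _, htr⟩ := spec hA
  rw [htr, Complex.ofReal_im]

theorem stmt6 (n d : ℕ) (hn : 0 < n) (hd : 0 < d)
    (X : Matrix (Fin n × Fin d) (Fin n × Fin d) ℂ) (hX : X.PosSemidef) (hX0 : X ≠ 0)
    (h : ∀ (x : Fin n → ℂ) (y : Fin d → ℂ),
      (∑ i, Complex.normSq (x i)) = 1 → (∑ j, Complex.normSq (y j)) = 1 →
      (star (fun p : Fin n × Fin d => x p.1 * y p.2) ⬝ᵥ
          X *ᵥ (fun p : Fin n × Fin d => x p.1 * y p.2)).re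
        < (X * X).trace.re / X.trace.re) :
    X ∉ SEP n d := by
  rintro ⟨k, A, B, hA, hB, hXsum⟩
  obtain ⟨γ, V0, hγ, -, hrepX, htrX⟩ := spec hX
  have htrRe : X.trace.re = ∑ p, γ p := by rw [htrX, Complex.ofReal_re]
  have htrpos : 0 < X.trace.re := by
    rw [htrRe]
    have hnn : ∀ p ∈ Finset.univ, (0:ℝ) ≤ γ p := fun p _ => hγ p
    rcases (Finset.sum_nonneg hnn).lt_or_eq with h' | h'
    · exact h'
    · exfalso
      refine hX0 ?_
      have hγ0 : ∀ p ∈ Finset.univ, γ p = 0 :=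
        (Finset.sum_eq_zero_iff_of_nonneg hnn).mp h'.symm
      ext m m'
      rw [hrepX m m']
      simp only [Matrix.zero_apply]
      refine Finset.sum_eq_zero fun p _ => ?_
      rw [hγ0 p (Finset.mem_univ p)]
      simp
  set c : ℝ := (X * X).trace.re / X.trace.re with hc
  have hkey := fun i => key X c h (hA i) (hB i)
  have h2 : (X * X).trace.re = ∑ i, ((A i ⊗ₖ B i) * X).trace.re := by
    have : X * X = (∑ i, A i ⊗ₖ B i) * X := by rw [← hXsum]
    rw [this, Finset.sum_mul, Matrix.trace_sum, Complex.re_sum]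
  have hex : ∃ i, A i ≠ 0 ∧ B i ≠ 0 := by
    by_contra hcon
    push_neg at hcon
    refine hX0 ?_
    rw [hXsum]
    refine Finset.sum_eq_zero fun i _ => ?_
    by_cases hAi : A i = 0
    · rw [hAi, Matrix.zero_kronecker]
    · rw [hcon i hAi, Matrix.kronecker_zero]
  obtain ⟨i0, hi0A, hi0B⟩ := hex
  have hlt : (X * X).trace.re < ∑ i, c * ((A i).trace.re * (B i).trace.re) := by
    rw [h2]
    exact Finset.sum_lt_sum (fun i _ => (hkey i).1)
      ⟨i0, Finset.mem_univ _, (hkey i0).2 hi0A hi0B⟩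
  have hsum : ∑ i, c * ((A i).trace.re * (B i).trace.re) = c * X.trace.re := by
    rw [← Finset.mul_sum]
    congr 1
    have : X.trace = ∑ i, (A i).trace * (B i).trace := by
      rw [hXsum, Matrix.trace_sum]
      exact Finset.sum_congr rfl fun i _ => Matrix.trace_kronecker _ _
    rw [this, Complex.re_sum]
    refine Finset.sum_congr rfl fun i _ => ?_
    rw [Complex.mul_re, trace_im (hA i), trace_im (hB i)]
    ring
  rw [hsum, hc, div_mul_cancel₀ _ htrpos.ne'] at hlt
  exact lt_irrefl _ hlt
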